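/- Fix q ∈ (0,1), a half-integer J, an integer R ≥ 1, and an integer n with 1 ≤ n ≤ 2JR. For 0 ≤ j ≤ 2J, let Z_j² = Σ over spin configurations σ : [−R+1,R]×[1,2J] → {−1/2, +1/2} having exactly n down spins in total and exactly j down spins among the sites (R,1),…,(R,2J), of Π_{(α,k)} q^{−2α σ(α,k)}. Then for every 0 ≤ j ≤ 2J−1, Z_{j+1}² ≤ 4J²R q^{2R} Z_j². -/

import Mathlib

open scoped BigOperators Classical

noncomputable section

namespace XXZ

/-- `m`-value of the basis index `k` for spin `J = twoJ/2`: `m = k - twoJ/2`. -/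
def mval (twoJ : ℕ) (k : Fin (twoJ + 1)) : ℝ := (k : ℝ) - (twoJ : ℝ) / 2

/-- The third spin matrix `S³` for spin `J = twoJ/2`. -/
def S3 (twoJ : ℕ) : Matrix (Fin (twoJ + 1)) (Fin (twoJ + 1)) ℂ :=
  Matrix.diagonal fun k => ((mval twoJ k : ℝ) : ℂ)

/-- The raising operator `S⁺`. -/
def Splus (twoJ : ℕ) : Matrix (Fin (twoJ + 1)) (Fin (twoJ + 1)) ℂ :=
  Matrix.of fun k' k => if (k' : ℕ) = (k : ℕ) + 1 then
    ((Real.sqrt ((twoJ : ℝ) / 2 * ((twoJ : ℝ) / 2 + 1) - mval twoJ k * (mval twoJ k + 1)) : ℝ) : ℂ)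
  else 0

/-- The lowering operator `S⁻`. -/
def Sminus (twoJ : ℕ) : Matrix (Fin (twoJ + 1)) (Fin (twoJ + 1)) ℂ :=
  Matrix.of fun k' k => if (k' : ℕ) + 1 = (k : ℕ) then
    ((Real.sqrt ((twoJ : ℝ) / 2 * ((twoJ : ℝ) / 2 + 1) - mval twoJ k * (mval twoJ k - 1)) : ℝ) : ℂ)
  else 0

/-- `S¹ = (S⁺ + S⁻)/2`. -/
def S1 (twoJ : ℕ) : Matrix (Fin (twoJ + 1)) (Fin (twoJ + 1)) ℂ :=
  (2 : ℂ)⁻¹ • (Splus twoJ + Sminus twoJ)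

/-- `S² = (S⁺ - S⁻)/(2i)`. -/
def S2 (twoJ : ℕ) : Matrix (Fin (twoJ + 1)) (Fin (twoJ + 1)) ℂ :=
  (2 * Complex.I)⁻¹ • (Splus twoJ - Sminus twoJ)

/-- A single-site operator `A` acting at the site `α` of a many-site system. -/
def oneSite {ι : Type*} [Fintype ι] [DecidableEq ι] {d : ℕ}
    (A : Matrix (Fin d) (Fin d) ℂ) (α : ι) :
    Matrix (ι → Fin d) (ι → Fin d) ℂ :=
  Matrix.of fun σ τ => A (σ α) (τ α) *
    ∏ β ∈ Finset.univ.filter (fun β => β ≠ α), (if σ β = τ β then (1 : ℂ) else 0)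

/-- The XXZ interaction `h^J(α,β)` for spin `J = twoJ/2` with anisotropy `Δ`:
`h = J²·1 − S³_α S³_β − Δ⁻¹(S¹_α S¹_β + S²_α S²_β) + J√(1−Δ⁻²)(S³_α − S³_β)`. -/
def hInt (twoJ : ℕ) (Δ : ℝ) {ι : Type*} [Fintype ι] [DecidableEq ι] (α β : ι) :
    Matrix (ι → Fin (twoJ + 1)) (ι → Fin (twoJ + 1)) ℂ :=
  ((((twoJ : ℝ) / 2) ^ 2 : ℝ) : ℂ) • (1 : Matrix (ι → Fin (twoJ + 1)) (ι → Fin (twoJ + 1)) ℂ)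
    - oneSite (S3 twoJ) α * oneSite (S3 twoJ) β
    - ((Δ⁻¹ : ℝ) : ℂ) • (oneSite (S1 twoJ) α * oneSite (S1 twoJ) β
        + oneSite (S2 twoJ) α * oneSite (S2 twoJ) β)
    + (((twoJ : ℝ) / 2 * Real.sqrt (1 - Δ⁻¹ ^ 2) : ℝ) : ℂ) •
        (oneSite (S3 twoJ) α - oneSite (S3 twoJ) β)

/-- The spin-`J` XXZ chain Hamiltonian `H^J_{[1,L]} = Σ_{α=1}^{L-1} h^J(α,α+1)`. -/
def Hchain (twoJ L : ℕ) (Δ : ℝ) :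
    Matrix (Fin L → Fin (twoJ + 1)) (Fin L → Fin (twoJ + 1)) ℂ :=
  ∑ x : Fin L, if h : (x : ℕ) + 1 < L then hInt twoJ Δ x ⟨(x : ℕ) + 1, h⟩ else 0

/-- Total third component of spin `S³_tot = Σ_α S³_α`. -/
def S3tot (twoJ : ℕ) {ι : Type*} [Fintype ι] [DecidableEq ι] :
    Matrix (ι → Fin (twoJ + 1)) (ι → Fin (twoJ + 1)) ℂ :=
  ∑ α : ι, oneSite (S3 twoJ) α

/-- The standard inner product, antilinear in the first argument. -/
def ip {n : Type*} [Fintype n] (v w : n → ℂ) : ℂ :=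
  ∑ i, (starRingEnd ℂ) (v i) * w i

/-- `ψ` lies in the sector of total `S³`-eigenvalue `M`. -/
def inSector (twoJ : ℕ) {ι : Type*} [Fintype ι] [DecidableEq ι]
    (M : ℝ) (ψ : (ι → Fin (twoJ + 1)) → ℂ) : Prop :=
  (S3tot twoJ).mulVec ψ = (M : ℂ) • ψ

/-- The spectral gap `γ([1,L],J,M)`: the infimum of the Rayleigh quotient of `H^J_{[1,L]}`
over nonzero vectors of the sector `M` orthogonal to the kernel of `H^J_{[1,L]}` in that
sector. -/
def gap (twoJ L : ℕ) (Δ M : ℝ) : ℝ :=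
  sInf { r : ℝ | ∃ ψ : (Fin L → Fin (twoJ + 1)) → ℂ, ψ ≠ 0 ∧
    inSector twoJ M ψ ∧
    (∀ φ : (Fin L → Fin (twoJ + 1)) → ℂ,
      (Hchain twoJ L Δ).mulVec φ = 0 → inSector twoJ M φ → ip φ ψ = 0) ∧
    r = (ip ψ ((Hchain twoJ L Δ).mulVec ψ)).re / (ip ψ ψ).re }

/-- The sites of the interval `[-R+1, R] ⊆ ℤ`. -/
abbrev RSite (R : ℕ) : Type := ↥(Finset.Icc (-(R : ℤ) + 1) (R : ℤ))

/-- The squared weight `W(σ)² = Π_{(α,k)} q^{-2α σ(α,k)}` of a spin configuration on the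
ladder `[-R+1,R] × [1,2J]`. -/
def Wsq (q : ℝ) (twoJ R : ℕ) (σ : (RSite R × Fin twoJ) → Fin (1 + 1)) : ℝ :=
  ∏ p : RSite R × Fin twoJ, q ^ (-2 * ((p.1 : ℤ) : ℝ) * mval 1 (σ p))

/-- The total number of down spins of `σ`. -/
def nDown (twoJ R : ℕ) (σ : (RSite R × Fin twoJ) → Fin (1 + 1)) : ℕ :=
  (Finset.univ.filter (fun p : RSite R × Fin twoJ => σ p = 0)).card

/-- The number of down spins of `σ` in the rightmost rung `{R} × [1,2J]`. -/
def jDownRight (twoJ R : ℕ) (σ : (RSite R × Fin twoJ) → Fin (1 + 1)) : ℕ :=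
  (Finset.univ.filter
    (fun p : RSite R × Fin twoJ => σ p = 0 ∧ ((p.1 : ℤ) = (R : ℤ)))).card

/-- The number of down spins of `σ` in the leftmost rung `{-R+1} × [1,2J]`. -/
def jDownLeft (twoJ R : ℕ) (σ : (RSite R × Fin twoJ) → Fin (1 + 1)) : ℕ :=
  (Finset.univ.filter
    (fun p : RSite R × Fin twoJ => σ p = 0 ∧ ((p.1 : ℤ) = -(R : ℤ) + 1))).card

/-- `Z_j² = Σ_{σ : n down spins, j of them in the rightmost rung} W(σ)²`. -/
def Zsq (q : ℝ) (twoJ R n j : ℕ) : ℝ :=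
  ∑ σ : (RSite R × Fin twoJ) → Fin (1 + 1),
    if nDown twoJ R σ = n ∧ jDownRight twoJ R σ = j then Wsq q twoJ R σ else 0

section Aux

lemma fin2_cases : ∀ v : Fin (1 + 1), v = 0 ∨ v = 1 := by decide

variable {twoJ R : ℕ}

/-- Flip a down spin at `p` up and an up spin at `p'` down. -/
def flipcfg (σ : (RSite R × Fin twoJ) → Fin (1 + 1)) (p p' : RSite R × Fin twoJ) :
    (RSite R × Fin twoJ) → Fin (1 + 1) :=
  Function.update (Function.update σ p 1) p' 0

lemma flipcfg_apply (σ : (RSite R × Fin twoJ) → Fin (1 + 1)) (p p' x : RSite R × Fin twoJ) :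
    flipcfg σ p p' x = if x = p' then 0 else if x = p then 1 else σ x := by
  simp [flipcfg, Function.update_apply]

lemma flipcfg_inj {σ₁ σ₂ : (RSite R × Fin twoJ) → Fin (1 + 1)} {p p' : RSite R × Fin twoJ}
    (hne : p ≠ p')
    (h1 : σ₁ p = 0) (h2 : σ₂ p = 0) (h1' : σ₁ p' = 1) (h2' : σ₂ p' = 1)
    (h : flipcfg σ₁ p p' = flipcfg σ₂ p p') : σ₁ = σ₂ := by
  funext x
  have hx := congrFun h x
  rw [flipcfg_apply, flipcfg_apply] at hx
  by_cases hxp' : x = p'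
  · rw [hxp', h1', h2']
  · by_cases hxp : x = p
    · rw [hxp, h1, h2]
    · simpa [hxp, hxp'] using hx

lemma filter_flipcfg_eq {σ : (RSite R × Fin twoJ) → Fin (1 + 1)} {p p' : RSite R × Fin twoJ}
    (hne : p ≠ p') (hp : σ p = 0) (hp' : σ p' = 1) :
    (Finset.univ.filter (fun x => flipcfg σ p p' x = 0))
      = insert p' ((Finset.univ.filter (fun x : RSite R × Fin twoJ => σ x = 0)).erase p) := by
  ext x
  by_cases hxp' : x = p'
  · subst hxp'
    simp [flipcfg_apply]
  · by_cases hxp : x = p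
    · subst hxp
      simp [flipcfg_apply, hxp', hne, hxp']
    · simp [flipcfg_apply, hxp, hxp']

lemma nDown_flipcfg {σ : (RSite R × Fin twoJ) → Fin (1 + 1)} {p p' : RSite R × Fin twoJ}
    (hne : p ≠ p') (hp : σ p = 0) (hp' : σ p' = 1) :
    nDown twoJ R (flipcfg σ p p') = nDown twoJ R σ := by
  unfold nDown
  rw [filter_flipcfg_eq hne hp hp']
  have hpmem : p ∈ (Finset.univ.filter (fun x : RSite R × Fin twoJ => σ x = 0)) := by
    simp [hp]
  have hp'notmem : p' ∉ (Finset.univ.filter (fun x : RSite R × Fin twoJ => σ x = 0)).erase p := by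
    simp [hp']
  rw [Finset.card_insert_of_notMem hp'notmem, Finset.card_erase_of_mem hpmem]
  have : 1 ≤ (Finset.univ.filter (fun x : RSite R × Fin twoJ => σ x = 0)).card :=
    Finset.card_pos.mpr ⟨p, hpmem⟩
  omega

lemma jDownRight_flipcfg {σ : (RSite R × Fin twoJ) → Fin (1 + 1)} {p p' : RSite R × Fin twoJ}
    (hne : p ≠ p') (hp : σ p = 0) (hp' : σ p' = 1)
    (hcolp : ((p.1 : ℤ)) = (R : ℤ)) (hcolp' : ((p'.1 : ℤ)) ≤ 0) (hR : 1 ≤ R) :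
    jDownRight twoJ R (flipcfg σ p p') = jDownRight twoJ R σ - 1 := by
  unfold jDownRight
  have hfilter : (Finset.univ.filter
      (fun x : RSite R × Fin twoJ => flipcfg σ p p' x = 0 ∧ ((x.1 : ℤ) = (R : ℤ))))
      = (Finset.univ.filter
          (fun x : RSite R × Fin twoJ => σ x = 0 ∧ ((x.1 : ℤ) = (R : ℤ)))).erase p := by
    ext x
    by_cases hxp' : x = p'
    · subst hxp'
      have : ¬ ((x.1 : ℤ) = (R : ℤ)) := by omega
      simp [flipcfg_apply, this]
    · by_cases hxp : x = p
      · subst hxp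
        simp [flipcfg_apply, hxp']
      · simp [flipcfg_apply, hxp, hxp']
  rw [hfilter, Finset.card_erase_of_mem (by simp [hp, hcolp])]

lemma wsq_pos {q : ℝ} (hq0 : 0 < q) (σ : (RSite R × Fin twoJ) → Fin (1 + 1)) :
    0 < Wsq q twoJ R σ :=
  Finset.prod_pos fun _ _ => Real.rpow_pos_of_pos hq0 _

lemma wsq_flipcfg {q : ℝ} (hq0 : 0 < q) {σ : (RSite R × Fin twoJ) → Fin (1 + 1)}
    {p p' : RSite R × Fin twoJ} (hne : p ≠ p') (hp : σ p = 0) (hp' : σ p' = 1) :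
    Wsq q twoJ R σ
      = q ^ (2 * ((p.1 : ℤ) : ℝ) - 2 * ((p'.1 : ℤ) : ℝ)) * Wsq q twoJ R (flipcfg σ p p') := by
  classical
  have hp'mem : p' ∈ Finset.univ.erase p := by simp [Ne.symm hne]
  have hsplit : ∀ τ : (RSite R × Fin twoJ) → Fin (1 + 1),
      Wsq q twoJ R τ = q ^ (-2 * ((p.1 : ℤ) : ℝ) * mval 1 (τ p)) *
        (q ^ (-2 * ((p'.1 : ℤ) : ℝ) * mval 1 (τ p')) *
          ∏ x ∈ (Finset.univ.erase p).erase p',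
            q ^ (-2 * ((x.1 : ℤ) : ℝ) * mval 1 (τ x))) := by
    intro τ
    rw [Wsq, ← Finset.mul_prod_erase Finset.univ _ (Finset.mem_univ p),
      ← Finset.mul_prod_erase _ _ hp'mem]
  have hrest : ∀ x ∈ (Finset.univ.erase p).erase p', flipcfg σ p p' x = σ x := by
    intro x hx
    rcases Finset.mem_erase.mp hx with ⟨hx1, hx2⟩
    rcases Finset.mem_erase.mp hx2 with ⟨hx3, _⟩
    rw [flipcfg_apply, if_neg hx1, if_neg hx3]
  have hprodeq : (∏ x ∈ (Finset.univ.erase p).erase p',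
      q ^ (-2 * ((x.1 : ℤ) : ℝ) * mval 1 (flipcfg σ p p' x)))
      = ∏ x ∈ (Finset.univ.erase p).erase p',
          q ^ (-2 * ((x.1 : ℤ) : ℝ) * mval 1 (σ x)) :=
    Finset.prod_congr rfl (fun x hx => by rw [hrest x hx])
  rw [hsplit σ, hsplit (flipcfg σ p p'), hprodeq]
  have hfp : flipcfg σ p p' p = 1 := by rw [flipcfg_apply, if_neg hne]; simp
  have hfp' : flipcfg σ p p' p' = 0 := by rw [flipcfg_apply, if_pos rfl]
  rw [hp, hp', hfp, hfp']
  rw [← mul_assoc, ← mul_assoc, ← mul_assoc]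
  congr 1
  rw [← Real.rpow_add hq0, ← Real.rpow_add hq0, ← Real.rpow_add hq0]
  congr 1
  have h0 : mval 1 (0 : Fin (1 + 1)) = -(1/2 : ℝ) := by
    norm_num [mval]
  have h1 : mval 1 (1 : Fin (1 + 1)) = (1/2 : ℝ) := by
    norm_num [mval]
  rw [h0, h1]
  ring

lemma wsq_le_flipcfg {q : ℝ} (hq0 : 0 < q) (hq1 : q < 1)
    {σ : (RSite R × Fin twoJ) → Fin (1 + 1)}
    {p p' : RSite R × Fin twoJ} (hne : p ≠ p') (hp : σ p = 0) (hp' : σ p' = 1)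
    (hcolp : ((p.1 : ℤ)) = (R : ℤ)) (hcolp' : ((p'.1 : ℤ)) ≤ 0) :
    Wsq q twoJ R σ ≤ q ^ (2 * R) * Wsq q twoJ R (flipcfg σ p p') := by
  rw [wsq_flipcfg hq0 hne hp hp']
  apply mul_le_mul_of_nonneg_right _ (wsq_pos hq0 _).le
  have hcast : (q : ℝ) ^ (2 * R) = q ^ ((2 * R : ℕ) : ℝ) := (Real.rpow_natCast q (2 * R)).symm
  rw [hcast]
  apply Real.rpow_le_rpow_of_exponent_ge hq0 hq1.le
  have hb : ((p'.1 : ℤ) : ℝ) ≤ 0 := by exact_mod_cast hcolp'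
  have ha : ((p.1 : ℤ) : ℝ) = (R : ℝ) := by exact_mod_cast hcolp
  push_cast
  rw [ha]
  linarith

lemma card_left_RSite (R : ℕ) :
    (Finset.univ.filter (fun a : RSite R => ((a : ℤ)) ≤ 0)).card = R := by
  classical
  have hbij : (Finset.univ.filter (fun a : RSite R => ((a : ℤ)) ≤ 0)).card
      = (Finset.Icc (-(R : ℤ) + 1) 0).card := by
    apply Finset.card_nbij (i := fun a : RSite R => (a : ℤ))
    · intro a ha
      rw [Finset.mem_coe, Finset.mem_filter] at ha
      have h2 := a.2
      rw [Finset.mem_Icc] at h2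
      simp only [Finset.mem_coe, Finset.mem_Icc]
      omega
    · intro a _ b _ h
      exact Subtype.ext h
    · intro b hb
      rw [Finset.mem_coe, Finset.mem_Icc] at hb
      have hbmem : b ∈ Finset.Icc (-(R : ℤ) + 1) (R : ℤ) := by
        rw [Finset.mem_Icc]; omega
      refine ⟨⟨b, hbmem⟩, ?_, rfl⟩
      rw [Finset.mem_coe, Finset.mem_filter]
      exact ⟨Finset.mem_univ _, hb.2⟩
  rw [hbij, Int.card_Icc]
  omega

lemma card_left_sites (twoJ R : ℕ) :
    (Finset.univ.filter (fun x : RSite R × Fin twoJ => ((x.1 : ℤ)) ≤ 0)).card = R * twoJ := by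
  classical
  have hprod : (Finset.univ.filter (fun x : RSite R × Fin twoJ => ((x.1 : ℤ)) ≤ 0))
      = (Finset.univ.filter (fun a : RSite R => ((a : ℤ)) ≤ 0)) ×ˢ Finset.univ := by
    ext x
    simp [Finset.mem_product]
  rw [hprod, Finset.card_product, Finset.card_univ, Fintype.card_fin, card_left_RSite]

lemma exists_up_left {σ : (RSite R × Fin twoJ) → Fin (1 + 1)} {n j : ℕ}
    (hnd : nDown twoJ R σ = n) (hjd : jDownRight twoJ R σ = j + 1)
    (hn2 : n ≤ twoJ * R) (hR : 1 ≤ R) :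
    ∃ p' : RSite R × Fin twoJ, σ p' = 1 ∧ ((p'.1 : ℤ)) ≤ 0 := by
  classical
  by_contra hcon
  push_neg at hcon
  have hall : ∀ p' : RSite R × Fin twoJ, ((p'.1 : ℤ)) ≤ 0 → σ p' = 0 := by
    intro p' hle
    have h1 : σ p' ≠ 1 := by
      intro h
      have := hcon p' h
      omega
    rcases fin2_cases (σ p') with h | h
    · exact h
    · exact absurd h h1
  set L := Finset.univ.filter (fun x : RSite R × Fin twoJ => ((x.1 : ℤ)) ≤ 0) with hL
  set Rt := Finset.univ.filter
      (fun x : RSite R × Fin twoJ => σ x = 0 ∧ ((x.1 : ℤ) = (R : ℤ))) with hRt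
  have hdisj : Disjoint L Rt := by
    rw [Finset.disjoint_left]
    intro x hxL hxR
    rw [hL, Finset.mem_filter] at hxL
    rw [hRt, Finset.mem_filter] at hxR
    omega
  have hsub : L ∪ Rt ⊆ Finset.univ.filter (fun x : RSite R × Fin twoJ => σ x = 0) := by
    intro x hx
    rcases Finset.mem_union.mp hx with hx | hx
    · rw [hL, Finset.mem_filter] at hx
      simp [hall x hx.2]
    · rw [hRt, Finset.mem_filter] at hx
      simp [hx.2.1]
  have hcard := Finset.card_le_card hsub
  rw [Finset.card_union_of_disjoint hdisj] at hcard
  have hLcard : L.card = R * twoJ := card_left_sites twoJ R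
  have : R * twoJ + (j + 1) ≤ n := by
    rw [← hLcard, ← hjd, ← hnd]
    exact hcard
  have : twoJ * R = R * twoJ := Nat.mul_comm _ _
  omega

end Aux

/-- **The crude estimate**: `Z_{j+1}² ≤ 4J²R q^{2R} Z_j²` for `0 ≤ j ≤ 2J-1`. -/
theorem Zsq_step_estimate (q : ℝ) (hq0 : 0 < q) (hq1 : q < 1)
    (twoJ : ℕ) (h2J : 1 ≤ twoJ) (R : ℕ) (hR : 1 ≤ R)
    (n : ℕ) (hn1 : 1 ≤ n) (hn2 : n ≤ twoJ * R)
    (j : ℕ) (hj : j ≤ twoJ - 1) :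
    Zsq q twoJ R n (j + 1) ≤ (twoJ : ℝ) ^ 2 * R * q ^ (2 * R) * Zsq q twoJ R n j := by
  classical
  have hRmem : (R : ℤ) ∈ Finset.Icc (-(R : ℤ) + 1) (R : ℤ) := by
    rw [Finset.mem_Icc]; omega
  -- default pair
  set p₀ : RSite R × Fin twoJ := (⟨(R : ℤ), hRmem⟩, ⟨0, by omega⟩) with hp₀
  -- choice of the down-right / up-left sites
  have key : ∀ σ : (RSite R × Fin twoJ) → Fin (1 + 1),
      ∃ pp : (RSite R × Fin twoJ) × (RSite R × Fin twoJ),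
        (nDown twoJ R σ = n ∧ jDownRight twoJ R σ = j + 1) →
          (σ pp.1 = 0 ∧ ((pp.1.1 : ℤ)) = (R : ℤ) ∧ σ pp.2 = 1 ∧ ((pp.2.1 : ℤ)) ≤ 0) := by
    intro σ
    by_cases h : nDown twoJ R σ = n ∧ jDownRight twoJ R σ = j + 1
    · obtain ⟨hnd, hjd⟩ := h
      have h1 : ∃ p : RSite R × Fin twoJ, σ p = 0 ∧ ((p.1 : ℤ)) = (R : ℤ) := by
        have : 0 < (Finset.univ.filter
            (fun x : RSite R × Fin twoJ => σ x = 0 ∧ ((x.1 : ℤ) = (R : ℤ)))).card := by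
          rw [← jDownRight]; omega
        obtain ⟨p, hp⟩ := Finset.card_pos.mp this
        exact ⟨p, (Finset.mem_filter.mp hp).2⟩
      obtain ⟨p, hp1, hp2⟩ := h1
      obtain ⟨p', hp'1, hp'2⟩ := exists_up_left hnd hjd hn2 hR
      exact ⟨(p, p'), fun _ => ⟨hp1, hp2, hp'1, hp'2⟩⟩
    · exact ⟨(p₀, p₀), fun hc => absurd hc h⟩
  choose P hP using key
  set A := Finset.univ.filter
      (fun σ : (RSite R × Fin twoJ) → Fin (1 + 1) =>
        nDown twoJ R σ = n ∧ jDownRight twoJ R σ = j + 1) with hA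
  set B := Finset.univ.filter
      (fun σ : (RSite R × Fin twoJ) → Fin (1 + 1) =>
        nDown twoJ R σ = n ∧ jDownRight twoJ R σ = j) with hB
  have hPmem : ∀ σ ∈ A, σ (P σ).1 = 0 ∧ (((P σ).1.1 : ℤ)) = (R : ℤ) ∧
      σ (P σ).2 = 1 ∧ (((P σ).2.1 : ℤ)) ≤ 0 := by
    intro σ hσ
    exact hP σ (Finset.mem_filter.mp hσ).2
  have hPne : ∀ σ ∈ A, (P σ).1 ≠ (P σ).2 := by
    intro σ hσ h
    obtain ⟨_, h2, _, h4⟩ := hPmem σ hσ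
    rw [h] at h2
    omega
  -- the injection
  set e : ((RSite R × Fin twoJ) → Fin (1 + 1)) →
      (((RSite R × Fin twoJ) → Fin (1 + 1)) × Fin twoJ × RSite R × Fin twoJ) :=
    fun σ => (flipcfg σ (P σ).1 (P σ).2, (P σ).1.2, (P σ).2.1, (P σ).2.2) with he
  have hinj : ∀ σ₁ ∈ A, ∀ σ₂ ∈ A, e σ₁ = e σ₂ → σ₁ = σ₂ := by
    intro σ₁ hσ₁ σ₂ hσ₂ heq
    obtain ⟨ha1, ha2, ha3, ha4⟩ := hPmem σ₁ hσ₁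
    obtain ⟨hb1, hb2, hb3, hb4⟩ := hPmem σ₂ hσ₂
    rw [he] at heq
    simp only [Prod.mk.injEq] at heq
    obtain ⟨hflip, hk, hp'1, hp'2⟩ := heq
    have hP1 : (P σ₁).1 = (P σ₂).1 := by
      apply Prod.ext
      · exact Subtype.ext (by rw [ha2, hb2])
      · exact hk
    have hP2 : (P σ₁).2 = (P σ₂).2 := Prod.ext hp'1 hp'2
    rw [hP1] at hflip ha1
    rw [hP2] at hflip ha3
    exact flipcfg_inj (hPne σ₂ hσ₂) ha1 hb1 ha3 hb3 hflip
  -- basic facts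
  have hflipB : ∀ σ ∈ A, (e σ).1 ∈ B := by
    intro σ hσ
    obtain ⟨h1, h2, h3, h4⟩ := hPmem σ hσ
    obtain ⟨hnd, hjd⟩ := (Finset.mem_filter.mp hσ).2
    rw [hB, Finset.mem_filter]
    refine ⟨Finset.mem_univ _, ?_, ?_⟩
    · rw [he]; simpa [nDown_flipcfg (hPne σ hσ) h1 h3] using hnd
    · rw [he]
      simp only
      rw [jDownRight_flipcfg (hPne σ hσ) h1 h3 h2 h4 hR, hjd]
      omega
  -- the target product set
  set T := B ×ˢ ((Finset.univ : Finset (Fin twoJ)) ×ˢ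
      ((Finset.univ.filter (fun a : RSite R => ((a : ℤ)) ≤ 0)) ×ˢ
        (Finset.univ : Finset (Fin twoJ)))) with hT
  have himT : ∀ σ ∈ A, e σ ∈ T := by
    intro σ hσ
    obtain ⟨h1, h2, h3, h4⟩ := hPmem σ hσ
    rw [hT, Finset.mem_product]
    refine ⟨hflipB σ hσ, ?_⟩
    rw [Finset.mem_product]
    refine ⟨Finset.mem_univ _, ?_⟩
    rw [Finset.mem_product]
    exact ⟨Finset.mem_filter.mpr ⟨Finset.mem_univ _, h4⟩, Finset.mem_univ _⟩
  -- main calculation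
  have hZ1 : Zsq q twoJ R n (j + 1) = ∑ σ ∈ A, Wsq q twoJ R σ := by
    rw [Zsq, hA, Finset.sum_filter]
  have hZ0 : Zsq q twoJ R n j = ∑ σ ∈ B, Wsq q twoJ R σ := by
    rw [Zsq, hB, Finset.sum_filter]
  rw [hZ1, hZ0]
  have step1 : ∑ σ ∈ A, Wsq q twoJ R σ
      ≤ ∑ σ ∈ A, q ^ (2 * R) * Wsq q twoJ R (e σ).1 := by
    apply Finset.sum_le_sum
    intro σ hσ
    obtain ⟨h1, h2, h3, h4⟩ := hPmem σ hσ
    exact wsq_le_flipcfg hq0 hq1 (hPne σ hσ) h1 h3 h2 h4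
  have step2 : ∑ σ ∈ A, q ^ (2 * R) * Wsq q twoJ R (e σ).1
      = q ^ (2 * R) * ∑ x ∈ A.image e, Wsq q twoJ R x.1 := by
    rw [Finset.sum_image hinj, Finset.mul_sum]
  have step3 : ∑ x ∈ A.image e, Wsq q twoJ R x.1 ≤ ∑ x ∈ T, Wsq q twoJ R x.1 := by
    apply Finset.sum_le_sum_of_subset_of_nonneg
    · intro x hx
      obtain ⟨σ, hσ, rfl⟩ := Finset.mem_image.mp hx
      exact himT σ hσ
    · intro x _ _
      exact (wsq_pos hq0 _).le
  have step4 : ∑ x ∈ T, Wsq q twoJ R x.1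
      = ((twoJ : ℝ) * ((R : ℝ) * (twoJ : ℝ))) * ∑ σ ∈ B, Wsq q twoJ R σ := by
    rw [hT, Finset.sum_product]
    rw [Finset.mul_sum]
    apply Finset.sum_congr rfl
    intro σ _
    have hconst : ∀ y ∈ (Finset.univ : Finset (Fin twoJ)) ×ˢ
        ((Finset.univ.filter (fun a : RSite R => ((a : ℤ)) ≤ 0)) ×ˢ
          (Finset.univ : Finset (Fin twoJ))),
        Wsq q twoJ R (σ, y).1 = Wsq q twoJ R σ := fun _ _ => rfl
    rw [Finset.sum_congr rfl hconst, Finset.sum_const, Finset.card_product,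
      Finset.card_product, card_left_RSite, Finset.card_univ, Fintype.card_fin, nsmul_eq_mul]
    push_cast
    ring
  have hWB : 0 ≤ ∑ σ ∈ B, Wsq q twoJ R σ :=
    Finset.sum_nonneg fun σ _ => (wsq_pos hq0 _).le
  have hqpow : (0 : ℝ) ≤ q ^ (2 * R) := pow_nonneg hq0.le _
  calc ∑ σ ∈ A, Wsq q twoJ R σ
      ≤ q ^ (2 * R) * ∑ x ∈ A.image e, Wsq q twoJ R x.1 := by rw [← step2]; exact step1
    _ ≤ q ^ (2 * R) * (((twoJ : ℝ) * ((R : ℝ) * (twoJ : ℝ))) * ∑ σ ∈ B, Wsq q twoJ R σ) := by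
        apply mul_le_mul_of_nonneg_left _ hqpow
        rw [← step4]; exact step3
    _ = (twoJ : ℝ) ^ 2 * R * q ^ (2 * R) * ∑ σ ∈ B, Wsq q twoJ R σ := by ring

end XXZ
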